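/- Strong duality for the symmetric shortest transshipment LP: let W = diag(w) with w ∈ ℝᵐ entrywise positive, let A be a real n×m matrix, and let b ∈ ℝⁿ lie in the column space of A. Then the minimum min{ ‖Wx‖₁ : x ∈ ℝᵐ, Ax = b } and the maximum max{ bᵀy : y ∈ ℝⁿ, ‖W⁻¹Aᵀy‖_∞ ≤ 1 } are both attained and are equal. -/

import Mathlib

open Matrix BigOperators

/-- Asymmetric "norm" `p(v) = Σᵢ max(0, vᵢ)`. -/
noncomputable def pnorm {d : Type*} [Fintype d] (v : d → ℝ) : ℝ := ∑ i, max (v i) 0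

/-- Asymmetric "norm" `q(v) = max(0, maxᵢ vᵢ)`. -/
noncomputable def qnorm {d : Type*} [Fintype d] (v : d → ℝ) : ℝ :=
  Finset.univ.fold max 0 v

/-- ∞-norm `‖v‖_∞ = maxᵢ |vᵢ|` (as `max(0, maxᵢ |vᵢ|)`, which agrees with it). -/
noncomputable def infnorm {d : Type*} [Fintype d] (v : d → ℝ) : ℝ :=
  Finset.univ.fold max 0 (fun i => |v i|)

/-- 1-norm `‖v‖₁ = Σᵢ |vᵢ|`. -/
noncomputable def onenorm {d : Type*} [Fintype d] (v : d → ℝ) : ℝ := ∑ i, |v i|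

/-- `W★ : ℝᵐ → ℝ²ᵐ`, sending `x` to `(W₊x, −W₋x)`. -/
noncomputable def Wstar {m : ℕ} (wp wm : Fin m → ℝ) (x : Fin m → ℝ) : Fin m ⊕ Fin m → ℝ :=
  Sum.elim (fun e => wp e * x e) (fun e => -(wm e * x e))

/-- `R★ : ℝᵐ → ℝ²ᵐ`, sending `x` to `(W₊⁻¹x, −W₋⁻¹x)`. -/
noncomputable def Rstar {m : ℕ} (wp wm : Fin m → ℝ) (x : Fin m → ℝ) : Fin m ⊕ Fin m → ℝ :=
  Sum.elim (fun e => x e / wp e) (fun e => -(x e / wm e))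

/-- The transpose `R★ᵀ : ℝ²ᵐ → ℝᵐ`. -/
noncomputable def RstarT {m : ℕ} (wp wm : Fin m → ℝ) (g : Fin m ⊕ Fin m → ℝ) : Fin m → ℝ :=
  fun e => g (Sum.inl e) / wp e - g (Sum.inr e) / wm e

/-- Soft-max `lse_β(v) = (1/β)·ln(Σᵢ e^{β·vᵢ})`. -/
noncomputable def lse {d : Type*} [Fintype d] (β : ℝ) (v : d → ℝ) : ℝ :=
  (1 / β) * Real.log (∑ i, Real.exp (β * v i))

/-- Gradient of the soft-max: `∇lse_β(v)ᵢ = e^{β·vᵢ}/Σⱼ e^{β·vⱼ}`. -/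
noncomputable def gradLse {d : Type*} [Fintype d] (β : ℝ) (v : d → ℝ) : d → ℝ :=
  fun i => Real.exp (β * v i) / ∑ j, Real.exp (β * v j)

/-- Potential `φ_β(π) = lse_β(R★Aᵀπ)`. -/
noncomputable def pot {n m : ℕ} (A : Matrix (Fin n) (Fin m) ℝ) (wp wm : Fin m → ℝ)
    (β : ℝ) (π : Fin n → ℝ) : ℝ :=
  lse β (Rstar wp wm (Aᵀ *ᵥ π))

/-- Gradient of the potential: `∇φ_β(π) = A·R★ᵀ·∇lse_β(R★Aᵀπ)`. -/
noncomputable def gradPot {n m : ℕ} (A : Matrix (Fin n) (Fin m) ℝ) (wp wm : Fin m → ℝ)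
    (β : ℝ) (π : Fin n → ℝ) : Fin n → ℝ :=
  A *ᵥ RstarT wp wm (gradLse β (Rstar wp wm (Aᵀ *ᵥ π)))

lemma dp_swap {n m : ℕ} (A : Matrix (Fin n) (Fin m) ℝ) (x : Fin m → ℝ) (y : Fin n → ℝ) :
    (A *ᵥ x) ⬝ᵥ y = x ⬝ᵥ (Aᵀ *ᵥ y) := by
  rw [dotProduct_mulVec, Matrix.vecMul_transpose, dotProduct_comm]

lemma abs_le_infnorm {d : Type*} [Fintype d] (v : d → ℝ) (i : d) : |v i| ≤ infnorm v :=
  (Finset.le_fold_max _).2 (Or.inr ⟨i, Finset.mem_univ i, le_rfl⟩)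

/-- Strong duality for the symmetric shortest transshipment LP:
`min{ ‖Wx‖₁ : Ax = b } = max{ bᵀy : ‖W⁻¹Aᵀy‖_∞ ≤ 1 }`, both attained. -/
theorem symmetric_transshipment_strong_duality {n m : ℕ} (hn : 1 ≤ n) (hm : 1 ≤ m)
    (A : Matrix (Fin n) (Fin m) ℝ) (w : Fin m → ℝ) (hw : ∀ e, 0 < w e)
    (b : Fin n → ℝ) (hb : ∃ x : Fin m → ℝ, A *ᵥ x = b) :
    ∃ v : ℝ,
      IsLeast {c : ℝ | ∃ x : Fin m → ℝ, A *ᵥ x = b ∧ onenorm (fun e => w e * x e) = c} v ∧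
      IsGreatest {c : ℝ | ∃ y : Fin n → ℝ,
        infnorm (fun e => (Aᵀ *ᵥ y) e / w e) ≤ 1 ∧ b ⬝ᵥ y = c} v := by
  classical
  obtain ⟨x₀, hx₀⟩ := hb
  have hwne : ∀ e, w e ≠ 0 := fun e => (hw e).ne'
  -- the linear map T y = W⁻¹ Aᵀ y
  set T : (Fin n → ℝ) →ₗ[ℝ] (Fin m → ℝ) :=
    { toFun := fun y e => (Aᵀ *ᵥ y) e / w e
      map_add' := by intro y z; funext e; simp [Matrix.mulVec_add, add_div]
      map_smul' := by intro c y; funext e; simp [Matrix.mulVec_smul, mul_div_assoc] } with hTdef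
  have hTapp : ∀ y e, T y e = (Aᵀ *ᵥ y) e / w e := fun y e => rfl
  set f : (Fin n → ℝ) →ₗ[ℝ] ℝ :=
    { toFun := fun y => b ⬝ᵥ y
      map_add' := by intro y z; simp [dotProduct_add]
      map_smul' := by intro c y; simp [dotProduct_smul] } with hfdef
  have hker : LinearMap.ker T ≤ LinearMap.ker f := by
    intro y hy
    have hy' : T y = 0 := hy
    have hAy : Aᵀ *ᵥ y = 0 := by
      funext e
      have := congrFun hy' e
      rw [hTapp] at this
      have := (div_eq_zero_iff.mp this).resolve_right (hwne e)
      simpa using this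
    have : f y = b ⬝ᵥ y := rfl
    simp only [LinearMap.mem_ker]
    rw [this, ← hx₀, dp_swap, hAy, dotProduct_zero]
  set V : Subspace ℝ (Fin m → ℝ) := LinearMap.range T with hVdef
  set f₀ : V →ₗ[ℝ] ℝ :=
    ((LinearMap.ker T).liftQ f hker).comp (T.quotKerEquivRange.symm : V ≃ₗ[ℝ] _).toLinearMap
    with hf₀def
  have hf₀ : ∀ y : Fin n → ℝ, f₀ ⟨T y, LinearMap.mem_range_self T y⟩ = b ⬝ᵥ y := by
    intro y
    have h1 : (⟨T y, LinearMap.mem_range_self T y⟩ : V) = ⟨T y, ⟨y, rfl⟩⟩ := rfl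
    rw [hf₀def]
    simp only [LinearMap.comp_apply, LinearEquiv.coe_coe, h1]
    erw [LinearMap.quotKerEquivRange_symm_apply_image T y (LinearMap.mem_range_self T y)]
    exact rfl
  set f₀C : V →L[ℝ] ℝ := LinearMap.toContinuousLinearMap f₀ with hf₀Cdef
  have hf₀C : ∀ y : Fin n → ℝ, f₀C ⟨T y, LinearMap.mem_range_self T y⟩ = b ⬝ᵥ y := hf₀
  set v : ℝ := ‖f₀C‖ with hvdef
  -- key expansion: for feasible x' and any y, b ⬝ᵥ y = ∑ e, (w e * x' e) * T y e
  have hexp : ∀ (x' : Fin m → ℝ), A *ᵥ x' = b → ∀ y : Fin n → ℝ,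
      b ⬝ᵥ y = ∑ e, (w e * x' e) * T y e := by
    intro x' hx' y
    rw [← hx', dp_swap]
    unfold dotProduct
    refine Finset.sum_congr rfl (fun e _ => ?_)
    rw [hTapp]
    field_simp [hwne e]
  -- lower bound: v ≤ onenorm (W x') for any feasible x'
  have claim_lb : ∀ x' : Fin m → ℝ, A *ᵥ x' = b → v ≤ onenorm (fun e => w e * x' e) := by
    intro x' hx'
    apply ContinuousLinearMap.opNorm_le_bound
    · exact Finset.sum_nonneg (fun e _ => abs_nonneg _)
    · intro z
      obtain ⟨y, hy⟩ := LinearMap.mem_range.mp z.2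
      have hzeq : z = ⟨T y, LinearMap.mem_range_self T y⟩ := Subtype.ext hy.symm
      have heq : f₀C z = b ⬝ᵥ y := by rw [hzeq]; exact hf₀C y
      have hnorm : ‖z‖ = ‖T y‖ := by rw [hzeq]; rfl
      rw [heq, hnorm, hexp x' hx' y]
      calc ‖∑ e, (w e * x' e) * T y e‖ ≤ ∑ e, ‖(w e * x' e) * T y e‖ :=
            norm_sum_le _ _
        _ ≤ ∑ e, |w e * x' e| * ‖T y‖ := by
            refine Finset.sum_le_sum (fun e _ => ?_)
            rw [norm_mul]
            exact mul_le_mul_of_nonneg_left (norm_le_pi_norm (T y) e) (abs_nonneg _)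
        _ = onenorm (fun e => w e * x' e) * ‖T y‖ := by
            rw [onenorm, ← Finset.sum_mul]
  -- Hahn–Banach extension
  obtain ⟨g, hg, hgnorm⟩ := exists_extension_norm_eq V f₀C
  set c : Fin m → ℝ := fun e => g (fun j => if e = j then (1:ℝ) else 0) with hcdef
  set xs : Fin m → ℝ := fun e => c e / w e with hxsdef
  have hwxs : ∀ e, w e * xs e = c e := by
    intro e
    simp only [hxsdef]
    rw [mul_comm (w e) (c e / w e), div_mul_cancel₀ _ (hwne e)]
  have hgsum : ∀ z : Fin m → ℝ, g z = ∑ e, z e * c e := by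
    intro z
    have := LinearMap.pi_apply_eq_sum_univ (g : (Fin m → ℝ) →ₗ[ℝ] ℝ) z
    simpa [smul_eq_mul, hcdef] using this
  -- feasibility of xs
  have hAxs : A *ᵥ xs = b := by
    funext i
    set ε : Fin n → ℝ := fun j => if i = j then (1:ℝ) else 0 with hεdef
    have h1 : b ⬝ᵥ ε = b i := by
      simp [dotProduct, hεdef, mul_ite, Finset.sum_ite_eq]
    have h2 : g (T ε) = b ⬝ᵥ ε :=
      (hg ⟨T ε, LinearMap.mem_range_self T ε⟩).trans (hf₀C ε)
    have h3 : g (T ε) = ∑ e, (A i e / w e) * c e := by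
      rw [hgsum]
      refine Finset.sum_congr rfl (fun e _ => ?_)
      congr 1
      rw [hTapp]
      congr 1
      simp [Matrix.mulVec, dotProduct, hεdef, mul_ite, Finset.sum_ite_eq]
    have h4 : (A *ᵥ xs) i = ∑ e, (A i e / w e) * c e := by
      simp only [Matrix.mulVec, dotProduct, hxsdef]
      refine Finset.sum_congr rfl (fun e _ => ?_)
      ring
    rw [h4, ← h3, h2, h1]
  -- onenorm (W xs) ≤ v
  have honexs : onenorm (fun e => w e * xs e) ≤ v := by
    set s : Fin m → ℝ := fun e => if 0 ≤ c e then (1:ℝ) else -1 with hsdef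
    have hs1 : ‖s‖ ≤ 1 := by
      rw [pi_norm_le_iff_of_nonneg zero_le_one]
      intro e
      rw [hsdef]
      by_cases h : 0 ≤ c e <;> simp [h]
    have hgs : g s = ∑ e, |c e| := by
      rw [hgsum]
      refine Finset.sum_congr rfl (fun e _ => ?_)
      rw [hsdef]
      by_cases h : 0 ≤ c e
      · simp [h, abs_of_nonneg h]
      · push_neg at h
        simp [not_le.mpr h, abs_of_neg h]
    have : onenorm (fun e => w e * xs e) = ∑ e, |c e| := by
      rw [onenorm]
      exact Finset.sum_congr rfl (fun e _ => by rw [hwxs])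
    rw [this, ← hgs]
    calc g s ≤ ‖g s‖ := le_abs_self _
      _ ≤ ‖g‖ * ‖s‖ := g.le_opNorm s
      _ ≤ ‖g‖ * 1 := by
          exact mul_le_mul_of_nonneg_left hs1 (norm_nonneg g)
      _ = v := by rw [mul_one, hgnorm]
  have honexs' : onenorm (fun e => w e * xs e) = v :=
    le_antisymm honexs (claim_lb xs hAxs)
  -- max side: attainment via compactness on the unit ball of V
  have hK : IsCompact (Metric.closedBall (0 : V) 1) := isCompact_closedBall 0 1
  obtain ⟨zs, hzsK, hzsmax⟩ := hK.exists_isMaxOn ⟨0, by simp⟩ f₀C.continuous.continuousOn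
  have hzs1 : ‖zs‖ ≤ 1 := by simpa [Metric.mem_closedBall] using hzsK
  have hmax : ∀ z ∈ Metric.closedBall (0 : V) 1, f₀C z ≤ f₀C zs := hzsmax
  have hM0 : 0 ≤ f₀C zs := by
    have := hmax 0 (by simp)
    simpa using this
  have hvM : v = f₀C zs := by
    apply le_antisymm
    · apply ContinuousLinearMap.opNorm_le_bound _ hM0
      intro z
      rcases eq_or_ne z 0 with rfl | hz
      · simp
      · have hznorm : (0:ℝ) < ‖z‖ := norm_pos_iff.mpr hz
        have hu : ∀ (t : ℝ), |t| ≤ 1 → f₀C ((t / ‖z‖) • z) ≤ f₀C zs := by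
          intro t ht
          apply hmax
          rw [Metric.mem_closedBall, dist_zero_right]
          have hns : ‖(t / ‖z‖) • z‖ = |t| / ‖z‖ * ‖z‖ := by
            have hcoe : ‖(t / ‖z‖) • z‖ = ‖(t / ‖z‖) • (z : Fin m → ℝ)‖ := rfl
            rw [hcoe, norm_smul, Real.norm_eq_abs, abs_div, abs_norm]
            rfl
          rw [hns, div_mul_cancel₀ _ hznorm.ne']
          exact ht
        have h1 := hu 1 (by norm_num)
        have h2 := hu (-1) (by norm_num)
        rw [f₀C.map_smul, smul_eq_mul] at h1 h2
        have hne : ‖(z : Fin m → ℝ)‖ ≠ 0 := hznorm.ne'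
        have h1' : f₀C z ≤ f₀C zs * ‖z‖ := by
          have h := mul_le_mul_of_nonneg_right h1 hznorm.le
          have hh : 1 / ‖z‖ * f₀C z * ‖z‖ = f₀C z := by
            field_simp
          rwa [hh] at h
        have h2' : -(f₀C zs * ‖z‖) ≤ f₀C z := by
          have h := mul_le_mul_of_nonneg_right h2 hznorm.le
          have hh : -1 / ‖z‖ * f₀C z * ‖z‖ = -f₀C z := by
            field_simp
          rw [hh] at h
          linarith
        rw [Real.norm_eq_abs, abs_le]
        exact ⟨h2', h1'⟩
    · calc f₀C zs ≤ ‖f₀C zs‖ := le_abs_self _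
        _ ≤ ‖f₀C‖ * ‖zs‖ := f₀C.le_opNorm zs
        _ ≤ ‖f₀C‖ * 1 := mul_le_mul_of_nonneg_left hzs1 f₀C.opNorm_nonneg
        _ = v := by rw [mul_one]
  obtain ⟨ys, hys⟩ := zs.2
  have hzseq : zs = ⟨T ys, LinearMap.mem_range_self T ys⟩ := Subtype.ext hys.symm
  -- assemble
  refine ⟨v, ⟨⟨xs, hAxs, honexs'⟩, ?_⟩, ⟨⟨ys, ?_, ?_⟩, ?_⟩⟩
  · rintro cc ⟨x', hx', rfl⟩
    exact claim_lb x' hx'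
  · -- infnorm feasibility of ys
    rw [infnorm]
    rw [Finset.fold_max_le]
    refine ⟨zero_le_one, fun e _ => ?_⟩
    have h1 : (Aᵀ *ᵥ ys) e / w e = T ys e := (hTapp ys e).symm
    rw [h1]
    have h2 : T ys e = (zs : Fin m → ℝ) e := by rw [← hys]
    rw [h2]
    calc |(zs : Fin m → ℝ) e| ≤ ‖(zs : Fin m → ℝ)‖ := by
          simpa using norm_le_pi_norm (zs : Fin m → ℝ) e
      _ = ‖zs‖ := rfl
      _ ≤ 1 := hzs1
  · rw [← hf₀C ys, ← hzseq, ← hvM]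
  · rintro cc ⟨y, hy, rfl⟩
    rw [hexp xs hAxs y, ← honexs']
    rw [onenorm]
    refine Finset.sum_le_sum (fun e _ => ?_)
    calc (w e * xs e) * T y e ≤ |(w e * xs e) * T y e| := le_abs_self _
      _ = |w e * xs e| * |T y e| := abs_mul _ _
      _ ≤ |w e * xs e| * 1 := by
          refine mul_le_mul_of_nonneg_left ?_ (abs_nonneg _)
          calc |T y e| = |(Aᵀ *ᵥ y) e / w e| := by rw [hTapp]
            _ ≤ infnorm (fun e => (Aᵀ *ᵥ y) e / w e) := by
                  simpa using abs_le_infnorm (fun e => (Aᵀ *ᵥ y) e / w e) e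
            _ ≤ 1 := hy
      _ = |w e * xs e| := mul_one _
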